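/- Let F be a Ferrers shape with boundary word w = w_1...w_k in {D,R}. 0-1-fillings of F (arbitrary numbers of 1's per row/column) are in bijection with sequences (∅ = λ^0, λ^1, ..., λ^k = ∅) of partitions such that λ^i/λ^{i-1} is a horizontal strip whenever w_i = R, and λ^{i-1}/λ^i is a vertical strip whenever w_i = D. -/

import Mathlib

/-- `ν ⊆ μ` and the skew shape `μ/ν` is a horizontal strip (at most one box in
each column). -/
def HorizStrip (ν μ : YoungDiagram) : Prop :=
  ν ≤ μ ∧ ∀ i : ℕ, μ.rowLen (i + 1) ≤ ν.rowLen i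

/-- `ν ⊆ μ` and the skew shape `μ/ν` is a vertical strip (at most one box in each
row). -/
def VertStrip (ν μ : YoungDiagram) : Prop :=
  ν ≤ μ ∧ ∀ j : ℕ, μ.colLen (j + 1) ≤ ν.colLen j

/-- The boundary word `w : Fin k → Bool` (with `true` = R, a right-step, and
`false` = D, a down-step, read from top-left to bottom-right) encodes the Ferrers
shape `F`: the number of R's is the width of `F`, the number of D's is the height
of `F`, and the number of D's after the `x`-th R equals the length of the `x`-th
column of `F`. -/
def Encodes (F : YoungDiagram) {k : ℕ} (w : Fin k → Bool) : Prop :=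
  (Finset.univ.filter (fun j : Fin k => w j = true)).card = F.rowLen 0 ∧
  (Finset.univ.filter (fun j : Fin k => w j = false)).card = F.colLen 0 ∧
  ∀ i : Fin k, w i = true →
    F.colLen ((Finset.univ.filter (fun j : Fin k => j ≤ i ∧ w j = true)).card - 1) =
      (Finset.univ.filter (fun j : Fin k => i < j ∧ w j = false)).card

namespace DRSK

open YoungDiagram

/-- row lengths determine the diagram -/
theorem yd_ext_rowLen {μ ν : YoungDiagram} (h : ∀ i, μ.rowLen i = ν.rowLen i) : μ = ν := by
  ext c
  obtain ⟨i, j⟩ := c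
  simp only [YoungDiagram.mem_cells, YoungDiagram.mem_iff_lt_rowLen, h]

theorem le_iff_rowLen {μ ν : YoungDiagram} : μ ≤ ν ↔ ∀ i, μ.rowLen i ≤ ν.rowLen i := by
  constructor
  · intro h i
    rcases Nat.eq_zero_or_pos (μ.rowLen i) with h0 | h0
    · omega
    · have : (i, μ.rowLen i - 1) ∈ μ := by
        rw [YoungDiagram.mem_iff_lt_rowLen]; omega
      have : (i, μ.rowLen i - 1) ∈ ν := by
        rw [← YoungDiagram.cells_subset_iff] at h
        exact h this
      rw [YoungDiagram.mem_iff_lt_rowLen] at this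
      omega
  · intro h
    rw [← YoungDiagram.cells_subset_iff]
    intro c hc
    obtain ⟨i, j⟩ := c
    rw [YoungDiagram.mem_cells, YoungDiagram.mem_iff_lt_rowLen] at *
    exact lt_of_lt_of_le hc (h i)

theorem rowLen_zero_iff {μ : YoungDiagram} {i : ℕ} : μ.rowLen i = 0 ↔ μ.colLen 0 ≤ i := by
  have h1 : (i, 0) ∈ μ ↔ 0 < μ.rowLen i := by
    rw [YoungDiagram.mem_iff_lt_rowLen]
  have h2 : (i, 0) ∈ μ ↔ i < μ.colLen 0 := YoungDiagram.mem_iff_lt_colLen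
  rw [h1] at h2
  omega

theorem colLen_le_iff {μ ν : YoungDiagram} {a b : ℕ} :
    μ.colLen a ≤ ν.colLen b ↔ ∀ i, (i, a) ∈ μ → (i, b) ∈ ν := by
  constructor
  · intro h i hi
    rw [YoungDiagram.mem_iff_lt_colLen] at *
    omega
  · intro h
    by_contra hc
    push_neg at hc
    have : (ν.colLen b, a) ∈ μ := by rw [YoungDiagram.mem_iff_lt_colLen]; omega
    have := h _ this
    rw [YoungDiagram.mem_iff_lt_colLen] at this
    omega

theorem vertStrip_rowLen_iff {ν μ : YoungDiagram} (hle : ν ≤ μ) :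
    (∀ j, μ.colLen (j + 1) ≤ ν.colLen j) ↔ ∀ i, μ.rowLen i ≤ ν.rowLen i + 1 := by
  constructor
  · intro h i
    by_contra hc
    push_neg at hc
    have h1 : (i, ν.rowLen i + 1) ∈ μ := by rw [YoungDiagram.mem_iff_lt_rowLen]; omega
    have h2 : (i, ν.rowLen i) ∈ ν := by
      have := (colLen_le_iff.mp (h (ν.rowLen i))) i h1
      exact this
    rw [YoungDiagram.mem_iff_lt_rowLen] at h2
    omega
  · intro h j
    rw [colLen_le_iff]
    intro i hi
    rw [YoungDiagram.mem_iff_lt_rowLen] at hi ⊢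
    have := h i
    omega


/-- size of interval for `μ_i` -/
def mseq (l r : ℕ → ℕ) : ℕ → ℕ
  | 0 => r 0 + 2 - max (l 0) (r 0)
  | i + 1 => min (l i) (r (i + 1) + 1) + 1 - max (l (i + 1)) (r (i + 1))

/-- size of interval for `ν_i` -/
def nseq (l r : ℕ → ℕ) (i : ℕ) : ℕ :=
  min (l i) (r i) + 1 - max (l i - 1) (r (i + 1))

theorem key_identity (l0 l1 r0 r1 : ℕ) (hl : l1 ≤ l0) (hr : r1 ≤ r0) :
    (r0 + 2 - max l0 r0) * (min l0 (r1 + 1) + 1 - max l1 r1) =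
      (min l0 r0 + 1 - max (l0 - 1) r1) * (r1 + 2 - max l1 r1) := by
  have ha : r0 + 2 - max l0 r0 = 0 ∨ r0 + 2 - max l0 r0 = 1 ∨ r0 + 2 - max l0 r0 = 2 := by omega
  have hb : min l0 (r1 + 1) + 1 - max l1 r1 = 0 ∨ min l0 (r1 + 1) + 1 - max l1 r1 = 1 ∨
      min l0 (r1 + 1) + 1 - max l1 r1 = 2 := by omega
  have hc : min l0 r0 + 1 - max (l0 - 1) r1 = 0 ∨ min l0 r0 + 1 - max (l0 - 1) r1 = 1 ∨
      min l0 r0 + 1 - max (l0 - 1) r1 = 2 := by omega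
  have hd : r1 + 2 - max l1 r1 = 0 ∨ r1 + 2 - max l1 r1 = 1 ∨ r1 + 2 - max l1 r1 = 2 := by omega
  rcases ha with ha | ha | ha <;> rcases hb with hb | hb | hb <;>
    rcases hc with hc | hc | hc <;> rcases hd with hd | hd | hd <;>
    rw [ha, hb, hc, hd] <;> omega

theorem prod_mseq_eq (N : ℕ) :
    ∀ (l r : ℕ → ℕ), (∀ i, l (i + 1) ≤ l i) → (∀ i, r (i + 1) ≤ r i) →
    (∀ i, N ≤ i → l i = 0) → (∀ i, N ≤ i → r i = 0) →
    ∀ B, N + 1 ≤ B →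
      ∏ i ∈ Finset.range B, mseq l r i = 2 * ∏ i ∈ Finset.range B, nseq l r i := by
  induction N with
  | zero =>
    intro l r _ _ hl0 hr0 B hB
    have hl : ∀ i, l i = 0 := fun i => hl0 i (Nat.zero_le i)
    have hr : ∀ i, r i = 0 := fun i => hr0 i (Nat.zero_le i)
    obtain ⟨B', rfl⟩ : ∃ B', B = B' + 1 := ⟨B - 1, by omega⟩
    rw [Finset.prod_range_succ', Finset.prod_range_succ']
    have h1 : ∀ i, mseq l r (i + 1) = 1 := by
      intro i; simp [mseq, hl, hr]
    have h2 : ∀ i, nseq l r i = 1 := by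
      intro i; simp [nseq, hl, hr]
    simp [h1, h2, mseq, hl, hr]
  | succ N IH =>
    intro l r hlm hrm hl0 hr0 B hB
    obtain ⟨B', rfl⟩ : ∃ B', B = B' + 2 := ⟨B - 2, by omega⟩
    set l' : ℕ → ℕ := fun i => l (i + 1) with hl'
    set r' : ℕ → ℕ := fun i => r (i + 1) with hr'
    have IH' := IH l' r' (fun i => hlm (i + 1)) (fun i => hrm (i + 1))
      (fun i hi => hl0 (i + 1) (by omega)) (fun i hi => hr0 (i + 1) (by omega))
      (B' + 1) (by omega)
    have e1 : ∀ i, mseq l r (i + 2) = mseq l' r' (i + 1) := by intro i; rfl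
    have e2 : ∀ i, nseq l r (i + 1) = nseq l' r' i := by intro i; rfl
    -- LHS : split off two terms
    calc ∏ i ∈ Finset.range (B' + 2), mseq l r i
        = (∏ i ∈ Finset.range (B' + 1), mseq l r (i + 1)) * mseq l r 0 := by
          rw [Finset.prod_range_succ']
      _ = ((∏ i ∈ Finset.range B', mseq l r (i + 2)) * mseq l r 1) * mseq l r 0 := by
          rw [Finset.prod_range_succ']
      _ = ((∏ i ∈ Finset.range B', mseq l' r' (i + 1)) * mseq l r 1) * mseq l r 0 := by
          simp only [e1]
      _ = (mseq l r 0 * mseq l r 1) * (∏ i ∈ Finset.range B', mseq l' r' (i + 1)) := by ring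
      _ = (nseq l r 0 * mseq l' r' 0) * (∏ i ∈ Finset.range B', mseq l' r' (i + 1)) := by
          have := key_identity (l 0) (l 1) (r 0) (r 1) (hlm 0) (hrm 0)
          have hm0 : mseq l r 0 = r 0 + 2 - max (l 0) (r 0) := rfl
          have hm1 : mseq l r 1 = min (l 0) (r 1 + 1) + 1 - max (l 1) (r 1) := rfl
          have hn0 : nseq l r 0 = min (l 0) (r 0) + 1 - max (l 0 - 1) (r 1) := rfl
          have hm0' : mseq l' r' 0 = r 1 + 2 - max (l 1) (r 1) := rfl
          rw [hm0, hm1, hn0, hm0', this]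
      _ = nseq l r 0 * ((mseq l' r' 0) * ∏ i ∈ Finset.range B', mseq l' r' (i + 1)) := by ring
      _ = nseq l r 0 * ∏ i ∈ Finset.range (B' + 1), mseq l' r' i := by
          rw [Finset.prod_range_succ']; ring
      _ = nseq l r 0 * (2 * ∏ i ∈ Finset.range (B' + 1), nseq l' r' i) := by rw [IH']
      _ = 2 * (nseq l r 0 * ∏ i ∈ Finset.range (B' + 1), nseq l r (i + 1)) := by
          simp only [e2]; ring
      _ = 2 * ∏ i ∈ Finset.range (B' + 2), nseq l r i := by
          rw [Finset.prod_range_succ' (fun i => nseq l r i) (B' + 1),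
            Finset.prod_range_succ']
          ring


/-! ### interval characterizations -/

def mlo (a b : YoungDiagram) (i : ℕ) : ℕ := max (a.rowLen i) (b.rowLen i)

def mhi (a b : YoungDiagram) : ℕ → ℕ
  | 0 => b.rowLen 0 + 1
  | i + 1 => min (a.rowLen i) (b.rowLen (i + 1) + 1)

def nlo (a b : YoungDiagram) (i : ℕ) : ℕ := max (a.rowLen i - 1) (b.rowLen (i + 1))

def nhi (a b : YoungDiagram) (i : ℕ) : ℕ := min (a.rowLen i) (b.rowLen i)

theorem memM_iff {a b μ : YoungDiagram} :
    (HorizStrip a μ ∧ VertStrip b μ) ↔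
      ∀ i, mlo a b i ≤ μ.rowLen i ∧ μ.rowLen i ≤ mhi a b i := by
  constructor
  · rintro ⟨⟨hle1, hH⟩, ⟨hle2, hV⟩⟩
    have hV' := (vertStrip_rowLen_iff hle2).mp hV
    have h1 := le_iff_rowLen.mp hle1
    have h2 := le_iff_rowLen.mp hle2
    intro i
    refine ⟨max_le (h1 i) (h2 i), ?_⟩
    match i with
    | 0 => exact hV' 0
    | i + 1 => exact le_min (hH i) (hV' (i + 1))
  · intro h
    have hle1 : a ≤ μ := le_iff_rowLen.mpr fun i => le_trans (le_max_left _ _) (h i).1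
    have hle2 : b ≤ μ := le_iff_rowLen.mpr fun i => le_trans (le_max_right _ _) (h i).1
    refine ⟨⟨hle1, fun i => le_trans (h (i + 1)).2 (min_le_left _ _)⟩,
      ⟨hle2, (vertStrip_rowLen_iff hle2).mpr fun i => ?_⟩⟩
    match i with
    | 0 => exact (h 0).2
    | i + 1 => exact le_trans (h (i + 1)).2 (le_trans (min_le_right _ _) (le_refl _))

theorem memN_iff {a b ν : YoungDiagram} :
    (VertStrip ν a ∧ HorizStrip ν b) ↔
      ∀ i, nlo a b i ≤ ν.rowLen i ∧ ν.rowLen i ≤ nhi a b i := by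
  constructor
  · rintro ⟨⟨hle1, hV⟩, ⟨hle2, hH⟩⟩
    have hV' := (vertStrip_rowLen_iff hle1).mp hV
    have h1 := le_iff_rowLen.mp hle1
    have h2 := le_iff_rowLen.mp hle2
    intro i
    have h3 : a.rowLen i ≤ ν.rowLen i + 1 := hV' i
    have h4 : b.rowLen (i + 1) ≤ ν.rowLen i := hH i
    constructor
    · show max (a.rowLen i - 1) (b.rowLen (i + 1)) ≤ ν.rowLen i
      omega
    · exact le_min (h1 i) (h2 i)
  · intro h
    have hle1 : ν ≤ a := le_iff_rowLen.mpr fun i => le_trans (h i).2 (min_le_left _ _)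
    have hle2 : ν ≤ b := le_iff_rowLen.mpr fun i => le_trans (h i).2 (min_le_right _ _)
    refine ⟨⟨hle1, (vertStrip_rowLen_iff hle1).mpr fun i => ?_⟩,
      ⟨hle2, fun i => le_trans (le_max_right _ _) (h i).1⟩⟩
    have h5 : nlo a b i = max (a.rowLen i - 1) (b.rowLen (i + 1)) := rfl
    have h6 := (h i).1
    rw [h5] at h6
    omega

/-! ### diagrams from functions -/

def extFn (B : ℕ) (lo hi : ℕ → ℕ)
    (h : ∀ i : Fin B, (Finset.Icc (lo i.val) (hi i.val))) : ℕ → ℕ :=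
  fun i => if hi' : i < B then (h ⟨i, hi'⟩ : ℕ) else 0

theorem extFn_dec (B : ℕ) (lo hi : ℕ → ℕ) (Hdec : ∀ i, hi (i + 1) ≤ lo i)
    (h : ∀ i : Fin B, (Finset.Icc (lo i.val) (hi i.val))) :
    ∀ i, extFn B lo hi h (i + 1) ≤ extFn B lo hi h i := by
  intro i
  unfold extFn
  by_cases h1 : i + 1 < B
  · have h0 : i < B := by omega
    rw [dif_pos h1, dif_pos h0]
    have b1 : lo (i + 1) ≤ (h ⟨i + 1, h1⟩ : ℕ) ∧ (h ⟨i + 1, h1⟩ : ℕ) ≤ hi (i + 1) :=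
      Finset.mem_Icc.mp (h ⟨i + 1, h1⟩).2
    have b0 : lo i ≤ (h ⟨i, h0⟩ : ℕ) ∧ (h ⟨i, h0⟩ : ℕ) ≤ hi i :=
      Finset.mem_Icc.mp (h ⟨i, h0⟩).2
    have := Hdec i
    omega
  · rw [dif_neg h1]
    omega

theorem sorted_map_range (B : ℕ) (g : ℕ → ℕ) (hg : ∀ i, g (i + 1) ≤ g i) :
    List.Pairwise (· ≥ ·) ((List.range B).map g) := by
  have hA : Antitone g := antitone_nat_of_succ_le hg
  exact (List.pairwise_le_range (n := B)).map g (fun _ _ hab => hA hab)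

def diagOfFn (B : ℕ) (g : ℕ → ℕ) (hg : ∀ i, g (i + 1) ≤ g i) : YoungDiagram :=
  YoungDiagram.ofRowLens ((List.range B).map g) (sorted_map_range B g hg).sortedGE

theorem rowLen_diagOfFn (B : ℕ) (g : ℕ → ℕ) (hg : ∀ i, g (i + 1) ≤ g i) (i : ℕ) :
    (diagOfFn B g hg).rowLen i = if i < B then g i else 0 := by
  by_cases h : i < B
  · rw [if_pos h]
    have hlen : i < ((List.range B).map g).length := by simp [h]
    have := YoungDiagram.rowLen_ofRowLens (w := (List.range B).map g)
      (hw := (sorted_map_range B g hg).sortedGE) ⟨i, hlen⟩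
    simpa [diagOfFn] using this
  · rw [if_neg h]
    by_contra hc
    have hpos : 0 < (diagOfFn B g hg).rowLen i := by omega
    have : (i, 0) ∈ diagOfFn B g hg := by
      rw [YoungDiagram.mem_iff_lt_rowLen]; omega
    rw [diagOfFn, YoungDiagram.mem_ofRowLens] at this
    obtain ⟨hlt, -⟩ := this
    simp at hlt
    omega

/-! ### the interval equivalence -/

def intervalEquiv (lo hi : ℕ → ℕ) (B : ℕ)
    (Hdec : ∀ i, hi (i + 1) ≤ lo i)
    (Hlo : ∀ i, B ≤ i → lo i = 0) (Hhi : ∀ i, B ≤ i → hi i = 0) :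
    {μ : YoungDiagram // ∀ i, lo i ≤ μ.rowLen i ∧ μ.rowLen i ≤ hi i} ≃
      (∀ i : Fin B, (Finset.Icc (lo i.val) (hi i.val))) where
  toFun μ i := ⟨μ.1.rowLen i, Finset.mem_Icc.mpr (μ.2 i)⟩
  invFun h :=
    ⟨diagOfFn B (extFn B lo hi h) (extFn_dec B lo hi Hdec h), by
      intro i
      rw [rowLen_diagOfFn]
      by_cases hiB : i < B
      · rw [if_pos hiB]
        unfold extFn
        rw [dif_pos hiB]
        exact Finset.mem_Icc.mp (h ⟨i, hiB⟩).2
      · rw [if_neg hiB]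
        constructor
        · rw [Hlo i (by omega)]
        · omega⟩
  left_inv := by
    intro μ
    apply Subtype.ext
    apply yd_ext_rowLen
    intro i
    rw [rowLen_diagOfFn]
    by_cases hiB : i < B
    · rw [if_pos hiB]
      unfold extFn
      rw [dif_pos hiB]
    · rw [if_neg hiB]
      have := (μ.2 i).2
      have := Hhi i (by omega)
      omega
  right_inv := by
    intro h
    funext i
    apply Subtype.ext
    show (diagOfFn B (extFn B lo hi h) (extFn_dec B lo hi Hdec h)).rowLen ↑i = ((h i : ℕ))
    rw [rowLen_diagOfFn, if_pos i.isLt]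
    unfold extFn
    rw [dif_pos i.isLt]

theorem card_pi_Icc (lo hi : ℕ → ℕ) (B : ℕ) :
    Fintype.card (∀ i : Fin B, (Finset.Icc (lo i.val) (hi i.val))) =
      ∏ i ∈ Finset.range B, (hi i + 1 - lo i) := by
  rw [Fintype.card_pi]
  rw [← Fin.prod_univ_eq_prod_range (fun i => hi i + 1 - lo i) B]
  congr 1
  funext i
  rw [Fintype.card_coe, Nat.card_Icc]

/-! ### the local growth-rule equivalence -/

theorem localEquiv_nonempty (a b : YoungDiagram) :
    Nonempty ({μ : YoungDiagram // HorizStrip a μ ∧ VertStrip b μ} ≃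
      Bool × {ν : YoungDiagram // VertStrip ν a ∧ HorizStrip ν b}) := by
  set l := a.rowLen with hl
  set r := b.rowLen with hr
  set N0 := max (a.colLen 0) (b.colLen 0) with hN0
  set B := N0 + 2 with hB
  have hlz : ∀ i, N0 ≤ i → l i = 0 := by
    intro i hi; rw [hl, rowLen_zero_iff]; omega
  have hrz : ∀ i, N0 ≤ i → r i = 0 := by
    intro i hi; rw [hr, rowLen_zero_iff]; omega
  have hlm : ∀ i, l (i + 1) ≤ l i := fun i => a.rowLen_anti i (i + 1) (by omega)
  have hrm : ∀ i, r (i + 1) ≤ r i := fun i => b.rowLen_anti i (i + 1) (by omega)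
  -- M side
  have eM : {μ : YoungDiagram // HorizStrip a μ ∧ VertStrip b μ} ≃
      (∀ i : Fin B, (Finset.Icc (mlo a b i.val) (mhi a b i.val))) := by
    refine (Equiv.subtypeEquivRight fun μ => memM_iff).trans
      (intervalEquiv (mlo a b) (mhi a b) B ?_ ?_ ?_)
    · intro i
      calc mhi a b (i + 1) ≤ a.rowLen i := min_le_left _ _
        _ ≤ mlo a b i := le_max_left _ _
    · intro i hi
      show max (l i) (r i) = 0
      rw [hlz i (by omega), hrz i (by omega)]
      simp
    · intro i hi
      obtain ⟨i', rfl⟩ : ∃ i', i = i' + 1 := ⟨i - 1, by omega⟩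
      show min (l i') (r (i' + 1) + 1) = 0
      rw [hlz i' (by omega)]
      simp
  -- N side
  have eN : {ν : YoungDiagram // VertStrip ν a ∧ HorizStrip ν b} ≃
      (∀ i : Fin B, (Finset.Icc (nlo a b i.val) (nhi a b i.val))) := by
    refine (Equiv.subtypeEquivRight fun ν => memN_iff).trans
      (intervalEquiv (nlo a b) (nhi a b) B ?_ ?_ ?_)
    · intro i
      calc nhi a b (i + 1) ≤ b.rowLen (i + 1) := min_le_right _ _
        _ ≤ nlo a b i := le_max_right _ _
    · intro i hi
      show max (l i - 1) (r (i + 1)) = 0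
      rw [hlz i (by omega), hrz (i + 1) (by omega)]
      simp
    · intro i hi
      show min (l i) (r i) = 0
      rw [hlz i (by omega)]
      simp
  -- cardinalities
  have hcard : Fintype.card (∀ i : Fin B, (Finset.Icc (mlo a b i.val) (mhi a b i.val))) =
      Fintype.card (Bool × (∀ i : Fin B, (Finset.Icc (nlo a b i.val) (nhi a b i.val)))) := by
    rw [Fintype.card_prod, Fintype.card_bool, card_pi_Icc, card_pi_Icc]
    have hm : ∀ i, mhi a b i + 1 - mlo a b i = mseq l r i := by
      intro i
      match i with
      | 0 => rfl
      | i + 1 => rfl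
    have hn : ∀ i, nhi a b i + 1 - nlo a b i = nseq l r i := fun i => rfl
    rw [Finset.prod_congr rfl (fun i _ => hm i), Finset.prod_congr rfl (fun i _ => hn i)]
    exact prod_mseq_eq N0 l r hlm hrm hlz hrz B (by omega)
  exact ⟨eM.trans ((Fintype.equivOfCardEq hcard).trans (Equiv.prodCongr (Equiv.refl _) eN.symm))⟩


/-! ### basics about ⊥ -/

theorem rowLen_bot (i : ℕ) : (⊥ : YoungDiagram).rowLen i = 0 := by
  by_contra h
  have : (i, 0) ∈ (⊥ : YoungDiagram) := by
    rw [YoungDiagram.mem_iff_lt_rowLen]; omega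
  exact YoungDiagram.notMem_bot _ this

theorem colLen_bot (j : ℕ) : (⊥ : YoungDiagram).colLen j = 0 := by
  by_contra h
  have : (0, j) ∈ (⊥ : YoungDiagram) := by
    rw [YoungDiagram.mem_iff_lt_colLen]; omega
  exact YoungDiagram.notMem_bot _ this

theorem horizStrip_bot : HorizStrip (⊥ : YoungDiagram) ⊥ :=
  ⟨le_refl _, fun i => by rw [rowLen_bot, rowLen_bot]⟩

theorem vertStrip_bot : VertStrip (⊥ : YoungDiagram) ⊥ :=
  ⟨le_refl _, fun j => by rw [colLen_bot, colLen_bot]⟩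

/-! ### sequences -/

def SeqT {k : ℕ} (w : Fin k → Bool) : Type :=
  {lam : Fin (k + 1) → YoungDiagram //
    lam 0 = ⊥ ∧ lam (Fin.last k) = ⊥ ∧
    ∀ i : Fin k,
      if w i then HorizStrip (lam i.castSucc) (lam i.succ)
      else VertStrip (lam i.succ) (lam i.castSucc)}

/-- the cell count of a word -/
def cw {k : ℕ} (w : Fin k → Bool) : ℕ :=
  (Finset.univ.filter
    (fun p : Fin k × Fin k => p.1 < p.2 ∧ w p.1 = true ∧ w p.2 = false)).card

section Trivial

variable {k : ℕ} {w : Fin k → Bool}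
  (hadj : ¬ ∃ i : ℕ, ∃ h : i + 1 < k, w ⟨i, by omega⟩ = true ∧ w ⟨i + 1, h⟩ = false)

include hadj

theorem mono_of_noAdj : ∀ s t : Fin k, s ≤ t → w s = true → w t = true := by
  push_neg at hadj
  have step : ∀ (j : ℕ) (h : j + 1 < k), w ⟨j, by omega⟩ = true → w ⟨j + 1, h⟩ = true := by
    intro j h hj
    have := hadj j h
    rw [← Bool.ne_false_iff]
    intro hf
    exact (this hj) hf
  have aux : ∀ (d : ℕ) (s : Fin k) (h : s.val + d < k), w s = true → w ⟨s.val + d, h⟩ = true := by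
    intro d
    induction d with
    | zero => intro s h hs; simpa [Fin.eta] using hs
    | succ d IH =>
      intro s h hs
      have h' : s.val + d < k := by omega
      have := IH s h' hs
      exact step (s.val + d) (by omega) this
  intro s t hst hs
  have : t = ⟨s.val + (t.val - s.val), by omega⟩ := by
    apply Fin.ext; simp; omega
  rw [this]
  exact aux _ s _ hs

theorem cw_eq_zero_of_noAdj : cw w = 0 := by
  rw [cw, Finset.card_eq_zero, Finset.filter_eq_empty_iff]
  rintro p - ⟨hlt, hp1, hp2⟩
  have := mono_of_noAdj hadj p.1 p.2 (le_of_lt hlt) hp1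
  rw [this] at hp2
  simp at hp2

theorem seqT_forced_of_noAdj (L : SeqT w) : ∀ t : Fin (k + 1), L.1 t = ⊥ := by
  obtain ⟨lam, h0, hlast, hstep⟩ := L
  -- everything before the first R is ⊥
  have claim1 : ∀ (m : ℕ) (hm : m ≤ k),
      (∀ s : Fin k, s.val < m → w s = false) → lam ⟨m, by omega⟩ = ⊥ := by
    intro m
    induction m with
    | zero => intro _ _; exact h0
    | succ m IH =>
      intro hm hs
      have hprev : lam ⟨m, by omega⟩ = ⊥ := IH (by omega) (fun s hsm => hs s (by omega))
      set I : Fin k := ⟨m, by omega⟩ with hI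
      have hwm : w I = false := hs I (by simp [hI])
      have := hstep I
      rw [hwm] at this
      simp only [Bool.false_eq_true, if_false] at this
      have hcast : I.castSucc = (⟨m, by omega⟩ : Fin (k + 1)) := rfl
      have hsucc : I.succ = (⟨m + 1, by omega⟩ : Fin (k + 1)) := rfl
      rw [hcast, hsucc, hprev] at this
      exact le_bot_iff.mp this.1
  -- everything after the last D is ⊥
  have claim2 : ∀ (d : ℕ) (m : ℕ) (hm : m + d = k),
      (∀ s : Fin k, m ≤ s.val → w s = true) → lam ⟨m, by omega⟩ = ⊥ := by
    intro d
    induction d with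
    | zero =>
      intro m hm _
      have : (⟨m, by omega⟩ : Fin (k + 1)) = Fin.last k := by
        apply Fin.ext; simp; omega
      rw [this]; exact hlast
    | succ d IH =>
      intro m hm hs
      have hnext : lam ⟨m + 1, by omega⟩ = ⊥ := IH (m + 1) (by omega)
        (fun s h => hs s (by omega))
      set I : Fin k := ⟨m, by omega⟩ with hI
      have hwm : w I = true := hs I (by simp [hI])
      have := hstep I
      rw [hwm] at this
      simp only [if_true] at this
      have hcast : I.castSucc = (⟨m, by omega⟩ : Fin (k + 1)) := rfl
      have hsucc : I.succ = (⟨m + 1, by omega⟩ : Fin (k + 1)) := rfl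
      rw [hcast, hsucc, hnext] at this
      exact le_bot_iff.mp this.1
  intro t
  by_cases hcase : ∀ s : Fin k, s.val < t.val → w s = false
  · have := claim1 t.val (by omega) hcase
    simpa [Fin.eta] using this
  · push_neg at hcase
    obtain ⟨s0, hs0t, hs0⟩ := hcase
    rw [Bool.ne_false_iff] at hs0
    have hall : ∀ s : Fin k, t.val ≤ s.val → w s = true := by
      intro s hts
      exact mono_of_noAdj hadj s0 s (by rw [Fin.le_def]; omega) hs0
    have := claim2 (k - t.val) t.val (by omega) hall
    simpa [Fin.eta] using this

noncomputable def seqT_trivial_equiv : SeqT w ≃ (Fin 0 → Bool) where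
  toFun _ := fun x => x.elim0
  invFun _ := ⟨fun _ => ⊥, rfl, rfl, by
    intro t
    by_cases h : w t = true <;> simp [h, horizStrip_bot, vertStrip_bot]⟩
  left_inv := by
    intro L
    apply Subtype.ext
    funext t
    have h1 := seqT_forced_of_noAdj hadj L t
    simp [h1]
  right_inv := by
    intro f
    funext x
    exact x.elim0

end Trivial

section Swap

variable {k : ℕ} (i : ℕ) (hik : i + 1 < k) (w : Fin k → Bool)

def Iidx : Fin k := ⟨i, by omega⟩
def Jidx : Fin k := ⟨i + 1, hik⟩

theorem swap_lt (p q : Fin k) (hpq : p < q) (hne : ¬(p = Iidx i hik ∧ q = Jidx i hik)) :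
    Equiv.swap (Iidx i hik) (Jidx i hik) p < Equiv.swap (Iidx i hik) (Jidx i hik) q := by
  set I := Iidx i hik with hI
  set J := Jidx i hik with hJ
  have hIv : I.val = i := rfl
  have hJv : J.val = i + 1 := rfl
  rw [Fin.lt_def] at hpq
  by_cases hpI : p = I
  · subst hpI
    have hqJ : q ≠ J := fun h => hne ⟨rfl, h⟩
    have hqI : q ≠ I := by intro h; rw [h] at hpq; omega
    rw [Equiv.swap_apply_left, Equiv.swap_apply_of_ne_of_ne hqI hqJ]
    rw [Fin.lt_def, hJv]
    have := Fin.val_ne_of_ne hqJ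
    omega
  · by_cases hpJ : p = J
    · subst hpJ
      have hqI : q ≠ I := by
        intro h; rw [h] at hpq; rw [hIv] at hpq; omega
      have hqJ : q ≠ J := by intro h; rw [h] at hpq; omega
      rw [Equiv.swap_apply_right, Equiv.swap_apply_of_ne_of_ne hqI hqJ]
      rw [Fin.lt_def, hIv]
      omega
    · rw [Equiv.swap_apply_of_ne_of_ne hpI hpJ]
      by_cases hqI : q = I
      · subst hqI
        rw [Equiv.swap_apply_left, Fin.lt_def, hJv]
        have := Fin.val_ne_of_ne hpI
        have := Fin.val_ne_of_ne hpJ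
        omega
      · by_cases hqJ : q = J
        · subst hqJ
          rw [Equiv.swap_apply_right, Fin.lt_def, hIv]
          have := Fin.val_ne_of_ne hpI
          rw [hJv] at hpq
          omega
        · rw [Equiv.swap_apply_of_ne_of_ne hqI hqJ, Fin.lt_def]
          omega

theorem cw_swap (hwI : w (Iidx i hik) = true) (hwJ : w (Jidx i hik) = false) :
    cw (w ∘ Equiv.swap (Iidx i hik) (Jidx i hik)) + 1 = cw w := by
  set I := Iidx i hik with hI
  set J := Jidx i hik with hJ
  set σ := Equiv.swap I J with hσ
  have hσI : σ I = J := Equiv.swap_apply_left _ _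
  have hσJ : σ J = I := Equiv.swap_apply_right _ _
  have hσσ : ∀ p, σ (σ p) = p := fun p => Equiv.swap_apply_self _ _ _
  have hIJ : I < J := by rw [Fin.lt_def]; exact Nat.lt_succ_self i
  set S := Finset.univ.filter
    (fun p : Fin k × Fin k => p.1 < p.2 ∧ w p.1 = true ∧ w p.2 = false) with hS
  set S' := Finset.univ.filter
    (fun p : Fin k × Fin k => p.1 < p.2 ∧ (w ∘ σ) p.1 = true ∧ (w ∘ σ) p.2 = false) with hS'
  have hmemIJ : (I, J) ∈ S := by
    rw [hS, Finset.mem_filter]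
    exact ⟨Finset.mem_univ _, hIJ, hwI, hwJ⟩
  have hcard : S'.card = (S.erase (I, J)).card := by
    apply Finset.card_bij (fun p _ => (σ p.1, σ p.2))
    · rintro p hp
      rw [hS', Finset.mem_filter] at hp
      obtain ⟨-, hlt, h1, h2⟩ := hp
      have hne : ¬(p.1 = I ∧ p.2 = J) := by
        rintro ⟨e1, e2⟩
        rw [e1] at h1
        simp only [Function.comp_apply, hσI] at h1
        rw [h1] at hwJ
        simp at hwJ
      refine Finset.mem_erase.mpr ⟨?_, ?_⟩
      · intro hc
        have c1 : σ p.1 = I := congrArg Prod.fst hc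
        have c2 : σ p.2 = J := congrArg Prod.snd hc
        have e3 : p.1 = J := by
          have h' := congrArg σ c1
          rw [hσσ, hσI] at h'
          exact h'
        have e4 : p.2 = I := by
          have h' := congrArg σ c2
          rw [hσσ, hσJ] at h'
          exact h'
        rw [e3, e4, Fin.lt_def] at hlt
        have hIv' : (I : ℕ) = i := rfl
        have hJv' : (J : ℕ) = i + 1 := rfl
        omega
      · rw [hS, Finset.mem_filter]
        exact ⟨Finset.mem_univ _, swap_lt i hik p.1 p.2 hlt hne, h1, h2⟩
    · intro p hp q hq hpq
      have e1 : σ p.1 = σ q.1 := congrArg Prod.fst hpq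
      have e2 : σ p.2 = σ q.2 := congrArg Prod.snd hpq
      have : p.1 = q.1 := σ.injective e1
      have : p.2 = q.2 := σ.injective e2
      exact Prod.ext ‹p.1 = q.1› ‹p.2 = q.2›
    · intro q hq
      rw [Finset.mem_erase, hS, Finset.mem_filter] at hq
      obtain ⟨hqne, -, hlt, h1, h2⟩ := hq
      refine ⟨(σ q.1, σ q.2), ?_, ?_⟩
      · rw [hS', Finset.mem_filter]
        have hne : ¬(q.1 = I ∧ q.2 = J) := by
          rintro ⟨e1, e2⟩
          exact hqne (by rw [← e1, ← e2])
        refine ⟨Finset.mem_univ _, swap_lt i hik q.1 q.2 hlt hne, ?_, ?_⟩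
        · simp only [Function.comp_apply, hσσ]; exact h1
        · simp only [Function.comp_apply, hσσ]; exact h2
      · simp only [hσσ]
  show S'.card + 1 = S.card
  rw [hcard]
  exact Finset.card_erase_add_one hmemIJ

end Swap

noncomputable def locE (a b : YoungDiagram) :
    {μ : YoungDiagram // HorizStrip a μ ∧ VertStrip b μ} ≃
      Bool × {ν : YoungDiagram // VertStrip ν a ∧ HorizStrip ν b} :=
  Classical.choice (localEquiv_nonempty a b)

theorem locE_fst_congr {a a' b b' : YoungDiagram} (ha : a = a') (hb : b = b')
    {μ μ' : YoungDiagram} (hμ : μ = μ') (h : HorizStrip a μ ∧ VertStrip b μ)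
    (h' : HorizStrip a' μ' ∧ VertStrip b' μ') :
    (locE a b ⟨μ, h⟩).1 = (locE a' b' ⟨μ', h'⟩).1 := by
  subst ha; subst hb; subst hμ; rfl

theorem locE_snd_congr {a a' b b' : YoungDiagram} (ha : a = a') (hb : b = b')
    {μ μ' : YoungDiagram} (hμ : μ = μ') (h : HorizStrip a μ ∧ VertStrip b μ)
    (h' : HorizStrip a' μ' ∧ VertStrip b' μ') :
    ((locE a b ⟨μ, h⟩).2 : YoungDiagram) = ((locE a' b' ⟨μ', h'⟩).2 : YoungDiagram) := by
  subst ha; subst hb; subst hμ; rfl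

theorem locE_symm_congr {a a' b b' : YoungDiagram} (ha : a = a') (hb : b = b')
    {e e' : Bool} (he : e = e') {ν ν' : YoungDiagram} (hν : ν = ν')
    (h : VertStrip ν a ∧ HorizStrip ν b) (h' : VertStrip ν' a' ∧ HorizStrip ν' b') :
    (((locE a b).symm (e, ⟨ν, h⟩) : {μ // HorizStrip a μ ∧ VertStrip b μ}) : YoungDiagram) =
      (((locE a' b').symm (e', ⟨ν', h'⟩) :
        {μ // HorizStrip a' μ ∧ VertStrip b' μ}) : YoungDiagram) := by
  subst ha; subst hb; subst he; subst hν; rfl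

theorem locE_rt1 (a b : YoungDiagram) (x : {μ : YoungDiagram // HorizStrip a μ ∧ VertStrip b μ})
    (h2 : VertStrip ((locE a b x).2 : YoungDiagram) a ∧
      HorizStrip ((locE a b x).2 : YoungDiagram) b) :
    (((locE a b).symm ((locE a b x).1, ⟨((locE a b x).2 : YoungDiagram), h2⟩)) : YoungDiagram)
      = x.1 := by
  have h3 : ((locE a b x).1, (⟨((locE a b x).2 : YoungDiagram), h2⟩ :
      {ν : YoungDiagram // VertStrip ν a ∧ HorizStrip ν b})) = locE a b x :=
    Prod.ext rfl (Subtype.ext rfl)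
  rw [h3, Equiv.symm_apply_apply]

theorem locE_rt2 (a b : YoungDiagram) (e : Bool) (ν : YoungDiagram)
    (h : VertStrip ν a ∧ HorizStrip ν b)
    (h2 : HorizStrip a (((locE a b).symm (e, ⟨ν, h⟩)) : YoungDiagram) ∧
      VertStrip b (((locE a b).symm (e, ⟨ν, h⟩)) : YoungDiagram)) :
    locE a b ⟨(((locE a b).symm (e, ⟨ν, h⟩)) : YoungDiagram), h2⟩ = (e, ⟨ν, h⟩) := by
  have h3 : (⟨(((locE a b).symm (e, ⟨ν, h⟩)) : YoungDiagram), h2⟩ :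
      {μ : YoungDiagram // HorizStrip a μ ∧ VertStrip b μ}) = (locE a b).symm (e, ⟨ν, h⟩) :=
    Subtype.ext rfl
  rw [h3, Equiv.apply_symm_apply]

section SwapSeq

variable {k : ℕ} (i : ℕ) (hik : i + 1 < k) (w : Fin k → Bool)

def midx : Fin (k + 1) := ⟨i + 1, by omega⟩


theorem Ic_ne_midx : (Iidx i hik).castSucc ≠ midx i hik := by
  apply Fin.ne_of_val_ne
  show i ≠ i + 1
  omega

theorem Is_eq_midx : (Iidx i hik).succ = midx i hik := rfl

theorem Jc_eq_midx : (Jidx i hik).castSucc = midx i hik := rfl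

theorem Js_ne_midx : (Jidx i hik).succ ≠ midx i hik := by
  apply Fin.ne_of_val_ne
  show i + 2 ≠ i + 1
  omega

theorem succ_ne_midx {t : Fin k} (ht : t ≠ Iidx i hik) : t.succ ≠ midx i hik := by
  intro h
  exact ht (Fin.succ_injective _ (h.trans (Is_eq_midx i hik).symm))

theorem castSucc_ne_midx {t : Fin k} (ht : t ≠ Jidx i hik) :
    t.castSucc ≠ midx i hik := by
  intro h
  exact ht (Fin.castSucc_injective _ (h.trans (Jc_eq_midx i hik).symm))

theorem midx_ne_zero : (midx i hik) ≠ 0 := by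
  apply Fin.ne_of_val_ne
  show i + 1 ≠ 0
  omega

theorem midx_ne_last : (midx i hik) ≠ Fin.last k := by
  apply Fin.ne_of_val_ne
  show i + 1 ≠ k
  omega

theorem w'_at_I (hwJ : w (Jidx i hik) = false) : (w ∘ Equiv.swap (Iidx i hik) (Jidx i hik)) (Iidx i hik) = false := by
  simp only [Function.comp_apply, Equiv.swap_apply_left]
  exact hwJ

theorem w'_at_J (hwI : w (Iidx i hik) = true) : (w ∘ Equiv.swap (Iidx i hik) (Jidx i hik)) (Jidx i hik) = true := by
  simp only [Function.comp_apply, Equiv.swap_apply_right]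
  exact hwI

theorem w'_at_other {t : Fin k} (h1 : t ≠ Iidx i hik) (h2 : t ≠ Jidx i hik) :
    (w ∘ Equiv.swap (Iidx i hik) (Jidx i hik)) t = w t := by
  simp only [Function.comp_apply, Equiv.swap_apply_of_ne_of_ne h1 h2]

theorem seq_hH (hwI : w (Iidx i hik) = true) (L : SeqT w) :
    HorizStrip (L.1 (Iidx i hik).castSucc) (L.1 (midx i hik)) := by
  have h := L.2.2.2 (Iidx i hik)
  rw [hwI] at h
  simp only [if_true] at h
  exact h

theorem seq_hV (hwJ : w (Jidx i hik) = false) (L : SeqT w) :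
    VertStrip (L.1 (Jidx i hik).succ) (L.1 (midx i hik)) := by
  have h := L.2.2.2 (Jidx i hik)
  rw [hwJ] at h
  simp only [Bool.false_eq_true, if_false] at h
  exact h

theorem fwd_prop (hwI : w (Iidx i hik) = true) (hwJ : w (Jidx i hik) = false)
    (L : SeqT w) (ν : YoungDiagram)
    (hν : VertStrip ν (L.1 (Iidx i hik).castSucc) ∧ HorizStrip ν (L.1 (Jidx i hik).succ)) :
    (Function.update L.1 (midx i hik) ν) 0 = ⊥ ∧
    (Function.update L.1 (midx i hik) ν) (Fin.last k) = ⊥ ∧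
    ∀ t : Fin k,
      if (w ∘ Equiv.swap (Iidx i hik) (Jidx i hik)) t then
        HorizStrip ((Function.update L.1 (midx i hik) ν) t.castSucc)
          ((Function.update L.1 (midx i hik) ν) t.succ)
      else
        VertStrip ((Function.update L.1 (midx i hik) ν) t.succ)
          ((Function.update L.1 (midx i hik) ν) t.castSucc) := by
  obtain ⟨lam, h0, hlast, hstep⟩ := L
  refine ⟨?_, ?_, ?_⟩
  · rw [Function.update_of_ne (midx_ne_zero i hik).symm]
    exact h0
  · rw [Function.update_of_ne (midx_ne_last i hik).symm]
    exact hlast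
  · intro t
    by_cases htI : t = Iidx i hik
    · subst htI
      rw [w'_at_I i hik w hwJ]
      simp only [Bool.false_eq_true, if_false]
      rw [Is_eq_midx, Function.update_self,
        Function.update_of_ne (Ic_ne_midx i hik)]
      exact hν.1
    · by_cases htJ : t = Jidx i hik
      · subst htJ
        rw [w'_at_J i hik w hwI]
        simp only [if_true]
        rw [Jc_eq_midx, Function.update_self,
          Function.update_of_ne (Js_ne_midx i hik)]
        exact hν.2
      · rw [w'_at_other i hik w htI htJ,
          Function.update_of_ne (castSucc_ne_midx i hik htJ),
          Function.update_of_ne (succ_ne_midx i hik htI)]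
        exact hstep t

noncomputable def fwd (hwI : w (Iidx i hik) = true) (hwJ : w (Jidx i hik) = false)
    (L : SeqT w) :
    Bool × SeqT (w ∘ Equiv.swap (Iidx i hik) (Jidx i hik)) :=
  ((locE (L.1 (Iidx i hik).castSucc) (L.1 (Jidx i hik).succ)
      ⟨L.1 (midx i hik), seq_hH i hik w hwI L, seq_hV i hik w hwJ L⟩).1,
    ⟨Function.update L.1 (midx i hik)
      ((locE (L.1 (Iidx i hik).castSucc) (L.1 (Jidx i hik).succ)
        ⟨L.1 (midx i hik), seq_hH i hik w hwI L, seq_hV i hik w hwJ L⟩).2 : YoungDiagram),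
      fwd_prop i hik w hwI hwJ L _
        ((locE (L.1 (Iidx i hik).castSucc) (L.1 (Jidx i hik).succ)
          ⟨L.1 (midx i hik), seq_hH i hik w hwI L, seq_hV i hik w hwJ L⟩).2).2⟩)

theorem seq_hV' (hwJ : w (Jidx i hik) = false) (P : SeqT (w ∘ Equiv.swap (Iidx i hik) (Jidx i hik))) :
    VertStrip (P.1 (midx i hik)) (P.1 (Iidx i hik).castSucc) := by
  have h := P.2.2.2 (Iidx i hik)
  rw [w'_at_I i hik w hwJ] at h
  simp only [Bool.false_eq_true, if_false] at h
  exact h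

theorem seq_hH' (hwI : w (Iidx i hik) = true) (P : SeqT (w ∘ Equiv.swap (Iidx i hik) (Jidx i hik))) :
    HorizStrip (P.1 (midx i hik)) (P.1 (Jidx i hik).succ) := by
  have h := P.2.2.2 (Jidx i hik)
  rw [w'_at_J i hik w hwI] at h
  simp only [if_true] at h
  exact h

theorem bwd_prop (hwI : w (Iidx i hik) = true) (hwJ : w (Jidx i hik) = false)
    (P : SeqT (w ∘ Equiv.swap (Iidx i hik) (Jidx i hik))) (μ : YoungDiagram)
    (hμ : HorizStrip (P.1 (Iidx i hik).castSucc) μ ∧ VertStrip (P.1 (Jidx i hik).succ) μ) :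
    (Function.update P.1 (midx i hik) μ) 0 = ⊥ ∧
    (Function.update P.1 (midx i hik) μ) (Fin.last k) = ⊥ ∧
    ∀ t : Fin k,
      if w t then
        HorizStrip ((Function.update P.1 (midx i hik) μ) t.castSucc)
          ((Function.update P.1 (midx i hik) μ) t.succ)
      else
        VertStrip ((Function.update P.1 (midx i hik) μ) t.succ)
          ((Function.update P.1 (midx i hik) μ) t.castSucc) := by
  obtain ⟨lam, h0, hlast, hstep⟩ := P
  refine ⟨?_, ?_, ?_⟩
  · rw [Function.update_of_ne (midx_ne_zero i hik).symm]
    exact h0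
  · rw [Function.update_of_ne (midx_ne_last i hik).symm]
    exact hlast
  · intro t
    by_cases htI : t = Iidx i hik
    · subst htI
      rw [hwI]
      simp only [if_true]
      rw [Is_eq_midx, Function.update_self,
        Function.update_of_ne (Ic_ne_midx i hik)]
      exact hμ.1
    · by_cases htJ : t = Jidx i hik
      · subst htJ
        rw [hwJ]
        simp only [Bool.false_eq_true, if_false]
        rw [Jc_eq_midx, Function.update_self,
          Function.update_of_ne (Js_ne_midx i hik)]
        exact hμ.2
      · have := hstep t
        rw [w'_at_other i hik w htI htJ] at this
        rw [Function.update_of_ne (castSucc_ne_midx i hik htJ),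
          Function.update_of_ne (succ_ne_midx i hik htI)]
        exact this

noncomputable def bwd (hwI : w (Iidx i hik) = true) (hwJ : w (Jidx i hik) = false)
    (x : Bool × SeqT (w ∘ Equiv.swap (Iidx i hik) (Jidx i hik))) :
    SeqT w :=
  ⟨Function.update x.2.1 (midx i hik)
      (((locE (x.2.1 (Iidx i hik).castSucc) (x.2.1 (Jidx i hik).succ)).symm
        (x.1, ⟨x.2.1 (midx i hik), seq_hV' i hik w hwJ x.2, seq_hH' i hik w hwI x.2⟩)) :
        YoungDiagram),
    bwd_prop i hik w hwI hwJ x.2 _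
      (((locE (x.2.1 (Iidx i hik).castSucc) (x.2.1 (Jidx i hik).succ)).symm
        (x.1, ⟨x.2.1 (midx i hik), seq_hV' i hik w hwJ x.2, seq_hH' i hik w hwI x.2⟩))).2⟩

theorem fwd_bwd (hwI : w (Iidx i hik) = true) (hwJ : w (Jidx i hik) = false) (L : SeqT w) :
    bwd i hik w hwI hwJ (fwd i hik w hwI hwJ L) = L := by
  apply Subtype.ext
  funext t
  by_cases ht : t = midx i hik
  · subst ht
    have e1 : (bwd i hik w hwI hwJ (fwd i hik w hwI hwJ L)).1 (midx i hik) =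
        (((locE ((fwd i hik w hwI hwJ L).2.1 (Iidx i hik).castSucc)
            ((fwd i hik w hwI hwJ L).2.1 (Jidx i hik).succ)).symm
          ((fwd i hik w hwI hwJ L).1,
            ⟨(fwd i hik w hwI hwJ L).2.1 (midx i hik),
              seq_hV' i hik w hwJ (fwd i hik w hwI hwJ L).2,
              seq_hH' i hik w hwI (fwd i hik w hwI hwJ L).2⟩)) : YoungDiagram) :=
      Function.update_self _ _ _
    have ha : (fwd i hik w hwI hwJ L).2.1 ((Iidx i hik).castSucc) =
        L.1 ((Iidx i hik).castSucc) := Function.update_of_ne (Ic_ne_midx i hik) _ _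
    have hb : (fwd i hik w hwI hwJ L).2.1 ((Jidx i hik).succ) =
        L.1 ((Jidx i hik).succ) := Function.update_of_ne (Js_ne_midx i hik) _ _
    have hm : (fwd i hik w hwI hwJ L).2.1 (midx i hik) =
        ((locE (L.1 (Iidx i hik).castSucc) (L.1 (Jidx i hik).succ)
          ⟨L.1 (midx i hik), seq_hH i hik w hwI L, seq_hV i hik w hwJ L⟩).2 : YoungDiagram) :=
      Function.update_self _ _ _
    have hfst : (fwd i hik w hwI hwJ L).1 =
        (locE (L.1 (Iidx i hik).castSucc) (L.1 (Jidx i hik).succ)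
          ⟨L.1 (midx i hik), seq_hH i hik w hwI L, seq_hV i hik w hwJ L⟩).1 := rfl
    have e2 := locE_symm_congr ha hb hfst hm
      ⟨seq_hV' i hik w hwJ (fwd i hik w hwI hwJ L).2,
        seq_hH' i hik w hwI (fwd i hik w hwI hwJ L).2⟩
      ((locE (L.1 (Iidx i hik).castSucc) (L.1 (Jidx i hik).succ)
        ⟨L.1 (midx i hik), seq_hH i hik w hwI L, seq_hV i hik w hwJ L⟩).2).2
    have e3 := locE_rt1 (L.1 (Iidx i hik).castSucc) (L.1 (Jidx i hik).succ)
      ⟨L.1 (midx i hik), seq_hH i hik w hwI L, seq_hV i hik w hwJ L⟩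
      ((locE (L.1 (Iidx i hik).castSucc) (L.1 (Jidx i hik).succ)
        ⟨L.1 (midx i hik), seq_hH i hik w hwI L, seq_hV i hik w hwJ L⟩).2).2
    exact e1.trans (e2.trans e3)
  · have e1 : (bwd i hik w hwI hwJ (fwd i hik w hwI hwJ L)).1 t =
        (fwd i hik w hwI hwJ L).2.1 t := Function.update_of_ne ht _ _
    have e2 : (fwd i hik w hwI hwJ L).2.1 t = L.1 t := Function.update_of_ne ht _ _
    exact e1.trans e2

theorem bwd_fwd (hwI : w (Iidx i hik) = true) (hwJ : w (Jidx i hik) = false)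
    (x : Bool × SeqT (w ∘ Equiv.swap (Iidx i hik) (Jidx i hik))) :
    fwd i hik w hwI hwJ (bwd i hik w hwI hwJ x) = x := by
  obtain ⟨e, P⟩ := x
  have ha : (bwd i hik w hwI hwJ (e, P)).1 ((Iidx i hik).castSucc) =
      P.1 ((Iidx i hik).castSucc) := Function.update_of_ne (Ic_ne_midx i hik) _ _
  have hb : (bwd i hik w hwI hwJ (e, P)).1 ((Jidx i hik).succ) =
      P.1 ((Jidx i hik).succ) := Function.update_of_ne (Js_ne_midx i hik) _ _
  have hm : (bwd i hik w hwI hwJ (e, P)).1 (midx i hik) =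
      (((locE (P.1 (Iidx i hik).castSucc) (P.1 (Jidx i hik).succ)).symm
        (e, ⟨P.1 (midx i hik), seq_hV' i hik w hwJ P, seq_hH' i hik w hwI P⟩)) :
        YoungDiagram) := Function.update_self _ _ _
  have hrt := locE_rt2 (P.1 (Iidx i hik).castSucc) (P.1 (Jidx i hik).succ) e
    (P.1 (midx i hik)) ⟨seq_hV' i hik w hwJ P, seq_hH' i hik w hwI P⟩
    (((locE (P.1 (Iidx i hik).castSucc) (P.1 (Jidx i hik).succ)).symm
      (e, ⟨P.1 (midx i hik), seq_hV' i hik w hwJ P, seq_hH' i hik w hwI P⟩)).2)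
  apply Prod.ext
  · show (locE ((bwd i hik w hwI hwJ (e, P)).1 (Iidx i hik).castSucc)
        ((bwd i hik w hwI hwJ (e, P)).1 (Jidx i hik).succ)
        ⟨(bwd i hik w hwI hwJ (e, P)).1 (midx i hik),
          seq_hH i hik w hwI (bwd i hik w hwI hwJ (e, P)),
          seq_hV i hik w hwJ (bwd i hik w hwI hwJ (e, P))⟩).1 = e
    rw [locE_fst_congr ha hb hm
      ⟨seq_hH i hik w hwI (bwd i hik w hwI hwJ (e, P)),
        seq_hV i hik w hwJ (bwd i hik w hwI hwJ (e, P))⟩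
      (((locE (P.1 (Iidx i hik).castSucc) (P.1 (Jidx i hik).succ)).symm
        (e, ⟨P.1 (midx i hik), seq_hV' i hik w hwJ P, seq_hH' i hik w hwI P⟩)).2), hrt]
  · apply Subtype.ext
    funext t
    by_cases ht : t = midx i hik
    · subst ht
      have e1 : (fwd i hik w hwI hwJ (bwd i hik w hwI hwJ (e, P))).2.1 (midx i hik) =
          ((locE ((bwd i hik w hwI hwJ (e, P)).1 (Iidx i hik).castSucc)
            ((bwd i hik w hwI hwJ (e, P)).1 (Jidx i hik).succ)
            ⟨(bwd i hik w hwI hwJ (e, P)).1 (midx i hik),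
              seq_hH i hik w hwI (bwd i hik w hwI hwJ (e, P)),
              seq_hV i hik w hwJ (bwd i hik w hwI hwJ (e, P))⟩).2 : YoungDiagram) :=
        Function.update_self _ _ _
      have e2 := locE_snd_congr ha hb hm
        ⟨seq_hH i hik w hwI (bwd i hik w hwI hwJ (e, P)),
          seq_hV i hik w hwJ (bwd i hik w hwI hwJ (e, P))⟩
        (((locE (P.1 (Iidx i hik).castSucc) (P.1 (Jidx i hik).succ)).symm
          (e, ⟨P.1 (midx i hik), seq_hV' i hik w hwJ P, seq_hH' i hik w hwI P⟩)).2)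
      have e3 := congrArg (fun z : Bool ×
          {ν : YoungDiagram // VertStrip ν (P.1 (Iidx i hik).castSucc) ∧
            HorizStrip ν (P.1 (Jidx i hik).succ)} => (z.2 : YoungDiagram)) hrt
      simp only at e3
      exact e1.trans (e2.trans e3)
    · have e1 : (fwd i hik w hwI hwJ (bwd i hik w hwI hwJ (e, P))).2.1 t =
          (bwd i hik w hwI hwJ (e, P)).1 t := Function.update_of_ne ht _ _
      have e2 : (bwd i hik w hwI hwJ (e, P)).1 t = P.1 t := Function.update_of_ne ht _ _
      exact e1.trans e2

noncomputable def swapSeqEquiv (hwI : w (Iidx i hik) = true)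
    (hwJ : w (Jidx i hik) = false) :
    SeqT w ≃ Bool × SeqT (w ∘ Equiv.swap (Iidx i hik) (Jidx i hik)) where
  toFun := fwd i hik w hwI hwJ
  invFun := bwd i hik w hwI hwJ
  left_inv := fwd_bwd i hik w hwI hwJ
  right_inv := bwd_fwd i hik w hwI hwJ

end SwapSeq

theorem seq_equiv_of_cw (n : ℕ) : ∀ {k : ℕ} (w : Fin k → Bool), cw w = n →
    Nonempty (SeqT w ≃ (Fin n → Bool)) := by
  induction n with
  | zero =>
    intro k w hcw
    by_cases hadj : ∃ i : ℕ, ∃ h : i + 1 < k, w ⟨i, by omega⟩ = true ∧ w ⟨i + 1, h⟩ = false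
    · exfalso
      obtain ⟨i, hik, hwI, hwJ⟩ := hadj
      have hmem : (Iidx i hik, Jidx i hik) ∈ Finset.univ.filter
          (fun p : Fin k × Fin k => p.1 < p.2 ∧ w p.1 = true ∧ w p.2 = false) := by
        rw [Finset.mem_filter]
        refine ⟨Finset.mem_univ _, ?_, hwI, hwJ⟩
        rw [Fin.lt_def]
        exact Nat.lt_succ_self i
      have hpos : 0 < cw w := Finset.card_pos.mpr ⟨_, hmem⟩
      omega
    · exact ⟨seqT_trivial_equiv hadj⟩
  | succ n IH =>
    intro k w hcw
    by_cases hadj : ∃ i : ℕ, ∃ h : i + 1 < k, w ⟨i, by omega⟩ = true ∧ w ⟨i + 1, h⟩ = false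
    · obtain ⟨i, hik, hwI, hwJ⟩ := hadj
      have hwI' : w (Iidx i hik) = true := hwI
      have hwJ' : w (Jidx i hik) = false := hwJ
      have hsw := cw_swap i hik w hwI' hwJ'
      obtain ⟨E2⟩ := IH (w ∘ Equiv.swap (Iidx i hik) (Jidx i hik)) (by omega)
      exact ⟨(swapSeqEquiv i hik w hwI' hwJ').trans
        ((Equiv.prodCongr (Equiv.refl Bool) E2).trans (Fin.consEquiv (fun _ => Bool)))⟩
    · have h0 := cw_eq_zero_of_noAdj hadj
      omega


/-! ### cells of a Young diagram column by column -/

theorem card_eq_sum_colLens (F : YoungDiagram) :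
    F.cells.card = ∑ j ∈ Finset.range (F.rowLen 0), F.colLen j := by
  rw [Finset.card_eq_sum_card_fiberwise (f := fun c : ℕ × ℕ => c.2)
    (t := Finset.range (F.rowLen 0)) ?_]
  · apply Finset.sum_congr rfl
    intro j hj
    rw [← Finset.card_range (F.colLen j)]
    apply Finset.card_bij (fun c _ => c.1)
    · intro c hc
      rw [Finset.mem_filter] at hc
      obtain ⟨hc1, hc2⟩ := hc
      rw [Finset.mem_range, ← YoungDiagram.mem_iff_lt_colLen]
      rw [YoungDiagram.mem_cells] at hc1
      rw [← hc2]
      exact hc1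
    · intro c hc c' hc' h
      rw [Finset.mem_filter] at hc hc'
      exact Prod.ext h (hc.2.trans hc'.2.symm)
    · intro x hx
      rw [Finset.mem_range, ← YoungDiagram.mem_iff_lt_colLen] at hx
      exact ⟨(x, j), Finset.mem_filter.mpr ⟨(YoungDiagram.mem_cells _).mpr hx, rfl⟩, rfl⟩
  · intro c hc
    simp only [Finset.mem_coe] at hc ⊢
    rw [Finset.mem_range, ← YoungDiagram.mem_iff_lt_rowLen]
    rw [YoungDiagram.mem_cells] at hc
    exact F.up_left_mem (Nat.zero_le _) (le_refl _) hc

/-! ### cw as a sum over R positions -/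

theorem cw_eq_sum {k : ℕ} (w : Fin k → Bool) :
    cw w = ∑ i ∈ Finset.univ.filter (fun j : Fin k => w j = true),
      (Finset.univ.filter (fun j : Fin k => i < j ∧ w j = false)).card := by
  rw [cw, Finset.card_eq_sum_card_fiberwise (f := fun p : Fin k × Fin k => p.1)
    (t := Finset.univ) (fun x _ => Finset.mem_univ _)]
  have hg : ∀ i : Fin k,
      ((Finset.univ.filter
        (fun p : Fin k × Fin k => p.1 < p.2 ∧ w p.1 = true ∧ w p.2 = false)).filter
          (fun p => p.1 = i)).card =
      if w i = true then (Finset.univ.filter (fun j : Fin k => i < j ∧ w j = false)).card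
      else 0 := by
    intro i
    by_cases hwi : w i = true
    · rw [if_pos hwi]
      apply Finset.card_bij (fun p _ => p.2)
      · intro p hp
        rw [Finset.mem_filter, Finset.mem_filter] at hp
        obtain ⟨⟨-, h1, -, h3⟩, h4⟩ := hp
        rw [Finset.mem_filter]
        exact ⟨Finset.mem_univ _, h4 ▸ h1, h3⟩
      · intro p hp q hq h
        rw [Finset.mem_filter] at hp hq
        exact Prod.ext (hp.2.trans hq.2.symm) h
      · intro j hj
        rw [Finset.mem_filter] at hj
        obtain ⟨-, h1, h2⟩ := hj
        refine ⟨(i, j), ?_, rfl⟩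
        rw [Finset.mem_filter, Finset.mem_filter]
        exact ⟨⟨Finset.mem_univ _, h1, hwi, h2⟩, rfl⟩
    · rw [if_neg hwi, Finset.card_eq_zero, Finset.filter_eq_empty_iff]
      rintro p hp
      rw [Finset.mem_filter] at hp
      obtain ⟨-, -, h2, -⟩ := hp
      intro hc
      rw [hc] at h2
      exact hwi h2
  rw [Finset.sum_congr rfl (fun i _ => hg i)]
  rw [← Finset.sum_filter]

/-! ### Encodes gives the cell count -/

theorem encodes_cw (F : YoungDiagram) {k : ℕ} (w : Fin k → Bool) (hw : Encodes F w) :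
    cw w = F.cells.card := by
  classical
  obtain ⟨hR, hD, hcol⟩ := hw
  set R : Finset (Fin k) := Finset.univ.filter (fun j : Fin k => w j = true) with hRdef
  set m := R.card with hm
  have e : Fin m ≃o R := R.orderIsoOfFin rfl
  -- rank of the x-th R
  have hrank : ∀ x : Fin m,
      (Finset.univ.filter (fun j : Fin k => j ≤ (e x : Fin k) ∧ w j = true)).card
        = x.val + 1 := by
    intro x
    have hset : Finset.univ.filter (fun j : Fin k => j ≤ (e x : Fin k) ∧ w j = true) =
        (Finset.univ.filter (fun y : Fin m => y ≤ x)).image (fun y => ((e y : R) : Fin k)) := by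
      ext j
      simp only [Finset.mem_filter, Finset.mem_univ, true_and, Finset.mem_image]
      constructor
      · rintro ⟨hle, hj⟩
        have hjR : j ∈ R := Finset.mem_filter.mpr ⟨Finset.mem_univ _, hj⟩
        refine ⟨e.symm ⟨j, hjR⟩, ?_, ?_⟩
        · rw [← e.le_iff_le, OrderIso.apply_symm_apply]
          exact hle
        · rw [OrderIso.apply_symm_apply]
      · rintro ⟨y, hy, rfl⟩
        constructor
        · have : e y ≤ e x := e.monotone hy
          exact this
        · exact (Finset.mem_filter.mp (e y).2).2
    have hinj : Function.Injective (fun y : Fin m => ((e y : R) : Fin k)) :=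
      fun y z hyz => e.injective (Subtype.coe_injective hyz)
    rw [hset, Finset.card_image_of_injective _ hinj]
    have : Finset.univ.filter (fun y : Fin m => y ≤ x) = Finset.Iic x := by
      ext y; simp [Finset.mem_Iic]
    rw [this, Fin.card_Iic]
  -- value of colLen at each R position
  have hval : ∀ x : Fin m, F.colLen x.val =
      (Finset.univ.filter (fun j : Fin k => (e x : Fin k) < j ∧ w j = false)).card := by
    intro x
    have hwx : w (e x : Fin k) = true := (Finset.mem_filter.mp (e x).2).2
    have := hcol (e x : Fin k) hwx
    rw [hrank x] at this
    simpa using this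
  rw [cw_eq_sum, card_eq_sum_colLens, ← hR, ← hRdef]
  rw [← Fin.sum_univ_eq_sum_range (fun j => F.colLen j) m]
  symm
  apply Finset.sum_bij (fun (x : Fin m) _ => (e x : Fin k))
  · intro x _
    exact (e x).2
  · intro x _ y _ h
    exact e.injective (Subtype.coe_injective h)
  · intro j hj
    exact ⟨e.symm ⟨j, hj⟩, Finset.mem_univ _, by rw [OrderIso.apply_symm_apply]⟩
  · intro x _
    exact hval x

/-! ### fillings as boolean functions on cells -/

def fillEquiv (F : YoungDiagram) :
    {f : ℕ × ℕ → ℕ // ∀ c, f c ≠ 0 → c ∈ F ∧ f c = 1} ≃ (↥F.cells → Bool) where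
  toFun f := fun c => decide (f.1 (c : ℕ × ℕ) = 1)
  invFun g := ⟨fun c => if h : c ∈ F.cells then (if g ⟨c, h⟩ then 1 else 0) else 0, by
    intro c hc
    dsimp only at hc ⊢
    by_cases h : c ∈ F.cells
    · rw [dif_pos h] at hc ⊢
      by_cases hg : g ⟨c, h⟩
      · rw [if_pos hg]
        exact ⟨(YoungDiagram.mem_cells c).mp h, rfl⟩
      · rw [if_neg hg] at hc
        exact absurd rfl hc
    · rw [dif_neg h] at hc
      exact absurd rfl hc⟩
  left_inv f := by
    apply Subtype.ext
    funext c
    dsimp only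
    by_cases h : c ∈ F.cells
    · rw [dif_pos h]
      by_cases h1 : f.1 c = 1
      · simp only [h1, decide_eq_true_eq]
        simp [h1]
      · have h0 : f.1 c = 0 := by
          by_contra h0
          exact h1 (f.2 c h0).2
        simp [h1, h0]
    · rw [dif_neg h]
      by_cases hz : f.1 c = 0
      · rw [hz]
      · exact absurd ((YoungDiagram.mem_cells c).mpr (f.2 c hz).1) h
  right_inv g := by
    funext c
    have h : (c : ℕ × ℕ) ∈ F.cells := c.2
    show decide ((if h' : (c : ℕ × ℕ) ∈ F.cells then
      (if g ⟨(c : ℕ × ℕ), h'⟩ then 1 else 0) else 0) = 1) = g c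
    have hc : (⟨(c : ℕ × ℕ), h⟩ : ↥F.cells) = c := Subtype.ext rfl
    cases hg : g c <;> simp [h, hc, hg]


end DRSK

/-- Dual RSK growth-diagram correspondence on Ferrers shapes: 0-1-fillings of a
Ferrers shape `F` with boundary word `w` (arbitrarily many `1`'s per row and
column) are in bijection with sequences `(∅ = λ⁰, λ¹, …, λᵏ = ∅)` of partitions
such that `λ^i/λ^{i-1}` is a horizontal strip whenever `w_i = R` and
`λ^{i-1}/λ^i` is a vertical strip whenever `w_i = D`. -/
theorem zeroOneFillings_equiv_dualRSK_sequences (F : YoungDiagram) (k : ℕ)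
    (w : Fin k → Bool) (hw : Encodes F w) :
    Nonempty (
      {f : ℕ × ℕ → ℕ // ∀ c, f c ≠ 0 → c ∈ F ∧ f c = 1} ≃
      {lam : Fin (k + 1) → YoungDiagram //
        lam 0 = ⊥ ∧ lam (Fin.last k) = ⊥ ∧
        ∀ i : Fin k,
          if w i then HorizStrip (lam i.castSucc) (lam i.succ)
          else VertStrip (lam i.succ) (lam i.castSucc)}) := by
  classical
  have hcw : DRSK.cw w = F.cells.card := DRSK.encodes_cw F w hw
  obtain ⟨E⟩ := DRSK.seq_equiv_of_cw (DRSK.cw w) w rfl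
  exact ⟨(DRSK.fillEquiv F).trans
    ((Equiv.arrowCongr F.cells.equivFin (Equiv.refl Bool)).trans
      ((Equiv.arrowCongr (finCongr hcw.symm) (Equiv.refl Bool)).trans E.symm))⟩
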